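/- Let A(x) = x^{l'} + a·x^l + b be a polynomial with integer coefficients, p a prime, and k a natural number. Then there exists a polynomial U(x) with integer coefficients such that A(x^{p^k}) = A(x)^{p^k} + p·A(x)·U(x) + a·x^{l·p^k} + b + (−a·x^l − b)^{p^k}. -/

import Mathlib

open Polynomial

theorem stmt_2 (a b : ℤ) (l l' : ℕ) (hl : l < l') (p : ℕ) (hp : p.Prime) (k : ℕ)
    (A : ℤ[X]) (hA : A = X ^ l' + C a * X ^ l + C b) :
    ∃ U : ℤ[X],
      A.comp (X ^ p ^ k) =
        A ^ p ^ k + C (p : ℤ) * A * U + C a * X ^ (l * p ^ k) + C b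
          + (-(C a * X ^ l) - C b) ^ p ^ k := by
  set B : ℤ[X] := -(C a * X ^ l) - C b with hB
  refine ⟨∑ i ∈ Finset.Ioo 0 (p ^ k),
      A ^ (i - 1) * B ^ (p ^ k - i) * (((p ^ k).choose i / p : ℕ) : ℤ[X]), ?_⟩
  have hAB : A + B = X ^ l' := by rw [hA, hB]; ring
  have key := add_pow_prime_pow_eq hp A B k
  rw [hAB] at key
  have hkey' : (p : ℤ[X]) * A * B * ∑ i ∈ Finset.Ioo 0 (p ^ k),
        A ^ (i - 1) * B ^ (p ^ k - i - 1) * (((p ^ k).choose i / p : ℕ) : ℤ[X])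
      = (p : ℤ[X]) * ∑ i ∈ Finset.Ioo 0 (p ^ k),
        A ^ i * B ^ (p ^ k - i) * (((p ^ k).choose i / p : ℕ) : ℤ[X]) := by
    simp only [mul_assoc, Finset.mul_sum]
    refine Finset.sum_congr rfl fun i hi => ?_
    rw [Finset.mem_Ioo] at hi
    obtain ⟨j, rfl⟩ : ∃ j, i = j + 1 := ⟨i - 1, by omega⟩
    obtain ⟨m, hm⟩ : ∃ m, p ^ k - (j + 1) = m + 1 := ⟨p ^ k - (j + 1) - 1, by omega⟩
    rw [hm, Nat.add_sub_cancel, Nat.add_sub_cancel]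
    ring
  rw [hkey'] at key
  have hsum : A * ∑ i ∈ Finset.Ioo 0 (p ^ k),
        A ^ (i - 1) * B ^ (p ^ k - i) * (((p ^ k).choose i / p : ℕ) : ℤ[X])
      = ∑ i ∈ Finset.Ioo 0 (p ^ k),
        A ^ i * B ^ (p ^ k - i) * (((p ^ k).choose i / p : ℕ) : ℤ[X]) := by
    rw [Finset.mul_sum]
    refine Finset.sum_congr rfl fun i hi => ?_
    rw [Finset.mem_Ioo] at hi
    rw [← mul_assoc, ← mul_assoc, ← pow_succ', Nat.sub_add_cancel hi.1]
  have hC : (C (p : ℤ) : ℤ[X]) = (p : ℤ[X]) := map_natCast C p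
  have hcomp : A.comp (X ^ p ^ k) = (X ^ l') ^ p ^ k + C a * X ^ (l * p ^ k) + C b := by
    rw [hA]
    simp only [add_comp, mul_comp, C_comp, pow_comp, X_comp, ← pow_mul, mul_comm (p ^ k)]
  rw [hcomp, mul_assoc, hC, hsum, key]
  ring
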